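/- Let λ be a solution of the generalized characteristic equation such that limsup_{t→∞} ∫_0^r θ·|exp(−∫_{t−θ}^t λ(s) ds)| d‖η(t)‖(θ) < 1. Then for every solution x of the RFDE x'(t) = ∫_0^r x(t−θ) dη(t)(θ), the limit lim_{t→∞} x(t)·exp(−∫_{t₀}^t λ(s) ds) exists (as a finite complex number). -/

import Mathlib

open MeasureTheory Filter Topology

open MeasureTheory Filter Topology Set

section DelayAbstract

variable (y d : ℝ → ℂ) (a r c κ T : ℝ)

lemma rfde_mvi (hd : ∀ t, a ≤ t → HasDerivWithinAt y (d t) (Set.Ici a) t)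
    {a' b' C : ℝ} (ha : a ≤ a') (hab : a' ≤ b')
    (hC : ∀ s ∈ Set.Icc a' b', ‖d s‖ ≤ C) :
    ‖y b' - y a'‖ ≤ C * (b' - a') := by
  have h1 : ∀ s ∈ Set.Icc a' b', HasDerivWithinAt y (d s) (Set.Icc a' b') s :=
    fun s hs => (hd s (ha.trans hs.1)).mono (fun u hu => ha.trans hu.1)
  have h2 := (convex_Icc a' b').norm_image_sub_le_of_norm_hasDerivWithin_le h1 hC
      ⟨le_refl a', hab⟩ ⟨hab, le_refl b'⟩
  rwa [Real.norm_eq_abs, abs_of_nonneg (by linarith)] at h2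

lemma rfde_step (hr : 0 < r) (hκ1 : 1 < κ) (hκc : c * κ < 1)
    (hT : a + 2*r ≤ T)
    (hd : ∀ t, a ≤ t → HasDerivWithinAt y (d t) (Set.Ici a) t)
    (hkey : ∀ t, T ≤ t → ∀ S, 0 ≤ S →
      (∀ θ ∈ Set.Icc (0:ℝ) r, ‖y t - y (t - θ)‖ ≤ S * θ) → ‖d t‖ ≤ c * S)
    {t : ℝ} (ht : T ≤ t) (hpos : 0 < ‖d t‖) :
    ∃ θ q, 0 < θ ∧ θ ≤ r ∧ t - θ ≤ q ∧ q < t ∧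
      κ * ‖d t‖ < ‖d q‖ ∧ κ * ‖d t‖ * θ < ‖y t - y (t - θ)‖ := by
  have hS : ¬ (∀ θ ∈ Set.Icc (0:ℝ) r, ‖y t - y (t - θ)‖ ≤ (κ * ‖d t‖) * θ) := by
    intro hall
    have h1 := hkey t ht (κ * ‖d t‖) (by nlinarith) hall
    nlinarith
  push_neg at hS
  obtain ⟨θ, hθmem, hchord⟩ := hS
  have hθ0 : 0 < θ := by
    rcases eq_or_lt_of_le hθmem.1 with h | h
    · exfalso; rw [← h] at hchord; simp at hchord
    · exact h
  have hq : ¬ (∀ s ∈ Set.Icc (t-θ) t, ‖d s‖ ≤ κ * ‖d t‖) := by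
    intro hall
    have h2 := rfde_mvi y d a hd (show a ≤ t - θ by linarith [hθmem.2]) (by linarith) hall
    have : t - (t - θ) = θ := by ring
    rw [this] at h2
    linarith
  push_neg at hq
  obtain ⟨q, hqmem, hqgt⟩ := hq
  have hqt : q < t := by
    rcases eq_or_lt_of_le hqmem.2 with h | h
    · exfalso; rw [h] at hqgt; nlinarith
    · exact h
  exact ⟨θ, q, hθ0, hθmem.2, hqmem.1, hqt, hqgt, hchord⟩


lemma geom_partial_le {q : ℝ} (h0 : 0 < q) (h1 : q < 1) :
    ∀ j : ℕ, (∑ i ∈ Finset.range j, q^i) ≤ 1/(1-q) := by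
  intro j
  have hgm := geom_sum_mul q j
  have h3 : (0:ℝ) ≤ q^j := (pow_pos h0 j).le
  rw [le_div_iff₀ (by linarith : (0:ℝ) < 1 - q)]
  nlinarith

set_option maxHeartbeats 2000000 in
lemma rfde_no_blowup (hr : 0 < r) (hκ1 : 1 < κ) (hκc : c * κ < 1)
    (hT : a + 2*r ≤ T)
    (hd : ∀ t, a ≤ t → HasDerivWithinAt y (d t) (Set.Ici a) t)
    (hkey : ∀ t, T ≤ t → ∀ S, 0 ≤ S →
      (∀ θ ∈ Set.Icc (0:ℝ) r, ‖y t - y (t - θ)‖ ≤ S * θ) → ‖d t‖ ≤ c * S)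
    {t₁ B : ℝ} (ht₁ : T + r ≤ t₁)
    (hB : ∀ s ∈ Set.Icc (t₁ - 2*r) t₁, ‖y s‖ ≤ B) :
    ‖d t₁‖ ≤ max 1 (2*B / (r * (κ - 1))) := by
  by_contra hcon
  push_neg at hcon
  set H₀ := ‖d t₁‖ with hH₀def
  have hH₀1 : 1 < H₀ := lt_of_le_of_lt (le_max_left _ _) hcon
  have hBpos : 0 ≤ B := le_trans (norm_nonneg _) (hB t₁ ⟨by linarith, le_refl _⟩)
  have hκ0 : 0 < κ - 1 := by linarith
  have hκpos : (0:ℝ) < κ := by linarith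
  set M := 2*B / (H₀ * (κ - 1)) with hMdef
  have hMr : M < r := by
    have h2 : 2*B / (r*(κ-1)) < H₀ := lt_of_le_of_lt (le_max_right _ _) hcon
    rw [div_lt_iff₀ (by nlinarith)] at h2
    rw [hMdef, div_lt_iff₀ (by nlinarith)]
    nlinarith
  have hM0 : 0 ≤ M := div_nonneg (by linarith) (by nlinarith)
  have hstep : ∀ p : ℝ, ∃ θ q, ((T ≤ p ∧ 0 < ‖d p‖) →
      (0 < θ ∧ θ ≤ r ∧ p - θ ≤ q ∧ q < p ∧ κ * ‖d p‖ < ‖d q‖ ∧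
        κ * ‖d p‖ * θ < ‖y p - y (p - θ)‖)) := by
    intro p
    by_cases hp : T ≤ p ∧ 0 < ‖d p‖
    · obtain ⟨θ, q, hh⟩ := rfde_step y d a r c κ T hr hκ1 hκc hT hd hkey hp.1 hp.2
      exact ⟨θ, q, fun _ => hh⟩
    · exact ⟨1, 0, fun hcontra => absurd hcontra hp⟩
  choose θf qf hspec using hstep
  obtain ⟨p, hp0, hpsucc⟩ : ∃ p : ℕ → ℝ, p 0 = t₁ ∧ ∀ k, p (k+1) = qf (p k) :=
    ⟨fun k => Nat.rec t₁ (fun _ ih => qf ih) k, rfl, fun _ => rfl⟩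
  set ρ := κ⁻¹ with hρdef
  have hρ0 : 0 < ρ := inv_pos.mpr hκpos
  have hρ1 : ρ < 1 := by
    rw [hρdef, inv_lt_one_iff₀]; right; exact hκ1
  have hρne : ρ ≠ 0 := ne_of_gt hρ0
  have hH₀ne : H₀ ≠ 0 := by intro h; rw [h] at hH₀1; linarith
  have hκne : κ ≠ 0 := ne_of_gt hκpos
  have hκ1ne : κ - 1 ≠ 0 := ne_of_gt hκ0
  -- invariant
  have inv : ∀ k, (t₁ - M * (1 - ρ^k) ≤ p k) ∧ (H₀ * κ^k ≤ ‖d (p k)‖) ∧ p k ≤ t₁ := by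
    intro k
    induction k with
    | zero =>
      refine ⟨by rw [hp0]; simp, ?_, le_of_eq hp0⟩
      rw [hp0, pow_zero, mul_one]
    | succ k ih =>
      obtain ⟨ih1, ih2, ih3⟩ := ih
      have hκk : (1:ℝ) ≤ κ^k := one_le_pow₀ hκ1.le
      have hρk0 : (0:ℝ) ≤ ρ^k := le_of_lt (pow_pos hρ0 k)
      have hρk1 : ρ^k ≤ 1 := pow_le_one₀ hρ0.le hρ1.le
      have hMk : M * (1 - ρ^k) ≤ M := by
        have h := mul_le_mul_of_nonneg_left (show 1 - ρ^k ≤ 1 by linarith) hM0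
        simpa using h
      have hpkT : T ≤ p k := by linarith
      have hpkpos : 0 < ‖d (p k)‖ :=
        lt_of_lt_of_le (mul_pos (by linarith) (pow_pos hκpos k)) ih2
      obtain ⟨hθ0, hθr, hq1, hq2, hq3, hq4⟩ := hspec (p k) ⟨hpkT, hpkpos⟩
      have hm1 : p k ∈ Set.Icc (t₁ - 2*r) t₁ := ⟨by linarith, ih3⟩
      have hm2 : p k - θf (p k) ∈ Set.Icc (t₁ - 2*r) t₁ := ⟨by linarith, by linarith⟩
      have hchordB : ‖y (p k) - y (p k - θf (p k))‖ ≤ 2*B := by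
        have h3 := norm_sub_le (y (p k)) (y (p k - θf (p k)))
        have b1 := hB _ hm1; have b2 := hB _ hm2
        linarith
      have hs1 : κ * (H₀ * κ^k) ≤ κ * ‖d (p k)‖ :=
        mul_le_mul_of_nonneg_left ih2 hκpos.le
      have hs2 : κ * (H₀ * κ^k) * θf (p k) ≤ κ * ‖d (p k)‖ * θf (p k) :=
        mul_le_mul_of_nonneg_right hs1 hθ0.le
      have hθbound : κ * (H₀ * κ^k) * θf (p k) < 2*B :=
        lt_of_le_of_lt hs2 (lt_of_lt_of_le hq4 hchordB)
      have hκκpos : (0:ℝ) < κ * (H₀ * κ^k) :=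
        mul_pos hκpos (mul_pos (by linarith) (pow_pos hκpos k))
      have hθb2 : θf (p k) ≤ (2*B/H₀) * ρ^(k+1) := by
        have h5 : θf (p k) < 2*B / (κ * (H₀ * κ^k)) := by
          rw [lt_div_iff₀ hκκpos, mul_comm]; exact hθbound
        have h6 : (2*B/H₀) * ρ^(k+1) = 2*B / (κ * (H₀ * κ^k)) := by
          have hκk0 : κ^k ≠ 0 := pow_ne_zero k hκne
          rw [hρdef, inv_pow, pow_succ]
          field_simp
        rw [h6]; exact h5.le
      refine ⟨?_, ?_, by rw [hpsucc]; linarith⟩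
      · have key : M * (1 - ρ^(k+1)) = M * (1 - ρ^k) + (2*B/H₀) * ρ^(k+1) := by
          have h2B : 2*B/H₀ = M * (κ - 1) := by
            rw [hMdef]; field_simp
          rw [h2B]
          have hρs : ρ^k = κ * ρ^(k+1) := by
            rw [pow_succ, hρdef]
            field_simp
          rw [hρs]; ring
        have hq1' : p k - θf (p k) ≤ p (k+1) := by rw [hpsucc]; exact hq1
        linarith
      · rw [hpsucc]
        have hEq : H₀ * κ^(k+1) = κ * (H₀ * κ^k) := by ring
        rw [hEq]
        exact le_trans hs1 hq3.le
  -- basic chain facts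
  have hpk_facts : ∀ k, T ≤ p k ∧ 0 < ‖d (p k)‖ ∧ t₁ - M ≤ p k := by
    intro k
    obtain ⟨ih1, ih2, ih3⟩ := inv k
    have hρk0 : (0:ℝ) ≤ ρ^k := le_of_lt (pow_pos hρ0 k)
    have hρk1 : ρ^k ≤ 1 := pow_le_one₀ hρ0.le hρ1.le
    have hMk : M * (1 - ρ^k) ≤ M := by
      have h := mul_le_mul_of_nonneg_left (show 1 - ρ^k ≤ 1 by linarith) hM0
      simpa using h
    exact ⟨by linarith, lt_of_lt_of_le (mul_pos (by linarith) (pow_pos hκpos k)) ih2,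
      by linarith⟩
  have hdec : ∀ k, p (k+1) < p k := by
    intro k
    obtain ⟨h1, h2, h3⟩ := hpk_facts k
    obtain ⟨hθ0, hθr, hq1, hq2, hq3, hq4⟩ := hspec (p k) ⟨h1, h2⟩
    rw [hpsucc]; exact hq2
  have hanti : Antitone p := antitone_nat_of_succ_le (fun k => (hdec k).le)
  have hbdd : BddBelow (Set.range p) :=
    ⟨t₁ - M, by rintro _ ⟨k, rfl⟩; exact (hpk_facts k).2.2⟩
  set ξ := ⨅ k, p k with hξdef
  have htend : Filter.Tendsto p Filter.atTop (nhds ξ) := tendsto_atTop_ciInf hanti hbdd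
  have hξle : ∀ k, ξ ≤ p k := fun k => ciInf_le hbdd k
  have hξlt : ∀ k, ξ < p k := fun k => lt_of_le_of_lt (hξle (k+1)) (hdec k)
  have hξT : T ≤ ξ := le_ciInf (fun k => (hpk_facts k).1)
  have hξa : a < ξ := by linarith
  have hder : HasDerivAt y (d ξ) ξ :=
    (hd ξ (le_of_lt hξa)).hasDerivAt (Ici_mem_nhds hξa)
  have hBigO := hder.hasFDerivAt.isBigO_sub
  rw [Asymptotics.isBigO_iff] at hBigO
  obtain ⟨C, hC⟩ := hBigO
  rw [Metric.eventually_nhds_iff] at hC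
  obtain ⟨δ, hδ0, hδ⟩ := hC
  set K := max C 1 with hKdef
  have hK1 : 1 ≤ K := le_max_right _ _
  have hKpos : 0 < K := lt_of_lt_of_le one_pos hK1
  have hKbound : ∀ s : ℝ, |s - ξ| < δ → ‖y s - y ξ‖ ≤ K * |s - ξ| := by
    intro s hs
    have h1 := hδ (show dist s ξ < δ by rwa [Real.dist_eq])
    rw [Real.norm_eq_abs] at h1
    have h2 : C * |s - ξ| ≤ K * |s - ξ| :=
      mul_le_mul_of_nonneg_right (le_max_left _ _) (abs_nonneg _)
    linarith
  -- pick k₁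
  have hev1 : ∀ᶠ k : ℕ in Filter.atTop, p k - ξ < δ := by
    have h1 : Filter.Tendsto (fun k => p k - ξ) Filter.atTop (nhds 0) := by
      have hsub := htend.sub_const ξ
      rw [sub_self] at hsub
      exact hsub
    obtain ⟨N, hN⟩ := (Metric.tendsto_atTop.mp h1) δ hδ0
    refine Filter.eventually_atTop.mpr ⟨N, fun k hk => ?_⟩
    have h2 := hN k hk
    rw [Real.dist_eq, sub_zero] at h2
    calc p k - ξ ≤ |p k - ξ| := le_abs_self _
      _ < δ := h2
  have hev2 : ∀ᶠ k : ℕ in Filter.atTop, K < κ * (H₀ * κ^k) ∧ 2*B < κ * (H₀ * κ^k) * δ := by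
    have h1 : Filter.Tendsto (fun k : ℕ => κ^k) Filter.atTop Filter.atTop :=
      tendsto_pow_atTop_atTop_of_one_lt hκ1
    have h2 : Filter.Tendsto (fun k : ℕ => κ * (H₀ * κ^k)) Filter.atTop Filter.atTop :=
      Filter.Tendsto.const_mul_atTop hκpos
        (Filter.Tendsto.const_mul_atTop (by linarith) h1)
    exact (h2.eventually_gt_atTop K).and
      ((Filter.Tendsto.atTop_mul_const hδ0 h2).eventually_gt_atTop (2*B))
  have hev3 : ∀ᶠ k : ℕ in Filter.atTop, (2*K/(H₀*(κ-1))) * ρ^k ≤ 1/2 := by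
    have h1 : Filter.Tendsto (fun k : ℕ => (2*K/(H₀*(κ-1))) * ρ^k) Filter.atTop (nhds 0) := by
      have h2 := tendsto_pow_atTop_nhds_zero_of_lt_one hρ0.le hρ1
      simpa using h2.const_mul (2*K/(H₀*(κ-1)))
    exact h1.eventually (eventually_le_nhds (show (0:ℝ) < 1/2 by norm_num))
  obtain ⟨k₁, hk₁⟩ := Filter.eventually_atTop.mp ((hev1.and hev2).and hev3)
  obtain ⟨⟨hk1δ, hk1K, hk1B⟩, hk1half⟩ := hk₁ k₁ (le_refl _)
  have he0 : ∀ k, 0 < p k - ξ := fun k => sub_pos.mpr (hξlt k)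
  have heanti : ∀ k j, k ≤ j → p j - ξ ≤ p k - ξ :=
    fun k j hkj => sub_le_sub_right (hanti hkj) ξ
  -- per-step bound for k ≥ k₁
  have hstepbound : ∀ k, k₁ ≤ k →
      p k - p (k+1) ≤ (2*K*(p k₁ - ξ)/H₀) * ρ^(k+1) := by
    intro k hk
    obtain ⟨h1, h2, h3⟩ := hpk_facts k
    obtain ⟨_, ih2, ih3⟩ := inv k
    obtain ⟨hθ0, hθr, hq1, hq2, hq3, hq4⟩ := hspec (p k) ⟨h1, h2⟩
    have hκmono : κ^k₁ ≤ κ^k := pow_le_pow_right₀ hκ1.le hk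
    have hXpos : (0:ℝ) < κ * (H₀ * κ^k) :=
      mul_pos hκpos (mul_pos (by linarith) (pow_pos hκpos k))
    have hXmono : κ * (H₀ * κ^k₁) ≤ κ * (H₀ * κ^k) := by
      apply mul_le_mul_of_nonneg_left ?_ hκpos.le
      exact mul_le_mul_of_nonneg_left hκmono (by linarith)
    have hKk : K < κ * (H₀ * κ^k) := lt_of_lt_of_le hk1K hXmono
    have hBk : 2*B < κ * (H₀ * κ^k) * δ :=
      lt_of_lt_of_le hk1B (mul_le_mul_of_nonneg_right hXmono hδ0.le)
    have hekδ : p k - ξ < δ := lt_of_le_of_lt (heanti k₁ k hk) hk1δ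
    have hs1 : κ * (H₀ * κ^k) ≤ κ * ‖d (p k)‖ :=
      mul_le_mul_of_nonneg_left ih2 hκpos.le
    have h10 : κ * (H₀ * κ^k) * θf (p k) ≤ κ * ‖d (p k)‖ * θf (p k) :=
      mul_le_mul_of_nonneg_right hs1 hθ0.le
    have hθb : θf (p k) ≤ 2*K*(p k - ξ)/(κ * (H₀ * κ^k)) := by
      by_cases hcase1 : θf (p k) ≤ p k - ξ
      · have hin1 : |p k - ξ| < δ := by rw [abs_of_pos (he0 k)]; exact hekδ
        have hv : p k - θf (p k) - ξ = (p k - ξ) - θf (p k) := by ring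
        have hin2 : |p k - θf (p k) - ξ| < δ := by
          rw [hv, abs_of_nonneg (by linarith)]
          linarith [hθ0]
        have hb1 := hKbound (p k) hin1
        have hb2 := hKbound (p k - θf (p k)) hin2
        rw [abs_of_pos (he0 k)] at hb1
        rw [hv, abs_of_nonneg (by linarith)] at hb2
        have h7 := norm_sub_le (y (p k) - y ξ) (y (p k - θf (p k)) - y ξ)
        rw [sub_sub_sub_cancel_right] at h7
        have h8 : K * ((p k - ξ) - θf (p k)) ≤ K * (p k - ξ) :=
          mul_le_mul_of_nonneg_left (by linarith [hθ0]) hKpos.le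
        have hchord2 : ‖y (p k) - y (p k - θf (p k))‖ ≤ 2*K*(p k - ξ) := by linarith
        have h9 : κ * ‖d (p k)‖ * θf (p k) < 2*K*(p k - ξ) :=
          lt_of_lt_of_le hq4 hchord2
        rw [le_div_iff₀ hXpos, mul_comm]
        linarith
      · push_neg at hcase1
        by_cases hcase2 : θf (p k) ≤ δ
        · exfalso
          have hin1 : |p k - ξ| < δ := by rw [abs_of_pos (he0 k)]; exact hekδ
          have hv : p k - θf (p k) - ξ = (p k - ξ) - θf (p k) := by ring
          have hin2 : |p k - θf (p k) - ξ| < δ := by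
            rw [hv, abs_of_nonpos (by linarith)]
            have := he0 k
            linarith
          have hb1 := hKbound (p k) hin1
          have hb2 := hKbound (p k - θf (p k)) hin2
          rw [abs_of_pos (he0 k)] at hb1
          rw [hv, abs_of_nonpos (by linarith)] at hb2
          have h7 := norm_sub_le (y (p k) - y ξ) (y (p k - θf (p k)) - y ξ)
          rw [sub_sub_sub_cancel_right] at h7
          have hchord2 : ‖y (p k) - y (p k - θf (p k))‖ ≤ K * θf (p k) := by
            have h9 : K * (p k - ξ) + K * (-((p k - ξ) - θf (p k))) = K * θf (p k) := by ring
            linarith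
          have h11 : κ * ‖d (p k)‖ * θf (p k) < K * θf (p k) :=
            lt_of_lt_of_le hq4 hchord2
          have h12 : K * θf (p k) < κ * (H₀ * κ^k) * θf (p k) :=
            mul_lt_mul_of_pos_right hKk hθ0
          linarith
        · exfalso
          push_neg at hcase2
          have hm1 : p k ∈ Set.Icc (t₁ - 2*r) t₁ := ⟨by linarith, ih3⟩
          have hm2 : p k - θf (p k) ∈ Set.Icc (t₁ - 2*r) t₁ :=
            ⟨by linarith, by linarith [hθ0]⟩
          have hchordB : ‖y (p k) - y (p k - θf (p k))‖ ≤ 2*B := by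
            have h3' := norm_sub_le (y (p k)) (y (p k - θf (p k)))
            have b1 := hB _ hm1; have b2 := hB _ hm2
            linarith
          have h11 : κ * (H₀ * κ^k) * δ ≤ κ * (H₀ * κ^k) * θf (p k) :=
            mul_le_mul_of_nonneg_left hcase2.le hXpos.le
          linarith [lt_of_lt_of_le hq4 hchordB]
    have hconv : 2*K*(p k - ξ)/(κ * (H₀ * κ^k)) ≤ (2*K*(p k₁ - ξ)/H₀) * ρ^(k+1) := by
      have hpow : (2*K*(p k₁ - ξ)/H₀) * ρ^(k+1) = 2*K*(p k₁ - ξ)/(κ * (H₀ * κ^k)) := by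
        have hκk0 : κ^k ≠ 0 := pow_ne_zero k hκne
        rw [hρdef, inv_pow, pow_succ]
        field_simp
      rw [hpow]
      have hnum : 2*K*(p k - ξ) ≤ 2*K*(p k₁ - ξ) :=
        mul_le_mul_of_nonneg_left (heanti k₁ k hk) (by linarith)
      exact div_le_div_of_nonneg_right hnum hXpos.le
    have hq1' : p k - p (k+1) ≤ θf (p k) := by
      have h5 : p k - θf (p k) ≤ p (k+1) := by rw [hpsucc]; exact hq1
      linarith
    linarith
  -- telescoping
  have hgeom := geom_partial_le hρ0 hρ1
  have hA0 : 0 ≤ (2*K*(p k₁ - ξ)/H₀) * ρ^(k₁+1) :=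
    mul_nonneg (div_nonneg (mul_nonneg (by linarith) (he0 k₁).le) (by linarith))
      (pow_pos hρ0 _).le
  have htel : ∀ j : ℕ, p k₁ - p (k₁ + j) ≤
      (2*K*(p k₁ - ξ)/H₀) * ρ^(k₁+1) * (∑ i ∈ Finset.range j, ρ^i) := by
    intro j
    induction j with
    | zero => simp
    | succ j ih =>
      have hs := hstepbound (k₁ + j) (Nat.le_add_right _ _)
      have hpow2 : (2*K*(p k₁ - ξ)/H₀) * ρ^(k₁ + j + 1) =
          ((2*K*(p k₁ - ξ)/H₀) * ρ^(k₁+1)) * ρ^j := by ring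
      rw [Finset.sum_range_succ]
      have hsplit : p k₁ - p (k₁ + (j+1)) =
          (p k₁ - p (k₁ + j)) + (p (k₁+j) - p (k₁+j+1)) := by
        have hidx : k₁ + (j+1) = (k₁ + j) + 1 := by ring
        rw [hidx]; ring
      have hmul : ((2*K*(p k₁ - ξ)/H₀) * ρ^(k₁+1)) *
          ((∑ i ∈ Finset.range j, ρ^i) + ρ^j) =
          ((2*K*(p k₁ - ξ)/H₀) * ρ^(k₁+1)) * (∑ i ∈ Finset.range j, ρ^i) +
          ((2*K*(p k₁ - ξ)/H₀) * ρ^(k₁+1)) * ρ^j := by ring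
      rw [hsplit, hmul]
      have hs' : p (k₁+j) - p (k₁+j+1) ≤ ((2*K*(p k₁ - ξ)/H₀) * ρ^(k₁+1)) * ρ^j := by
        rw [← hpow2]
        have : k₁ + j + 1 = (k₁ + j) + 1 := rfl
        rw [this]
        exact hs
      linarith
  have hbound2 : (2*K*(p k₁ - ξ)/H₀) * ρ^(k₁+1) * (1/(1-ρ)) ≤ (p k₁ - ξ) / 2 := by
    have hid : (2*K*(p k₁ - ξ)/H₀) * ρ^(k₁+1) * (1/(1-ρ)) =
        (p k₁ - ξ) * ((2*K/(H₀*(κ-1))) * ρ^k₁) := by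
      have h1ρ : 1 - ρ = (κ-1)*ρ := by
        rw [hρdef]; field_simp
      rw [h1ρ, pow_succ]
      field_simp
    rw [hid]
    calc (p k₁ - ξ) * ((2*K/(H₀*(κ-1))) * ρ^k₁) ≤ (p k₁ - ξ) * (1/2) :=
          mul_le_mul_of_nonneg_left hk1half (he0 k₁).le
      _ = (p k₁ - ξ) / 2 := by ring
  have hfinal : ∀ j, (p k₁ - ξ) / 2 ≤ p (k₁ + j) - ξ := by
    intro j
    have h1 := htel j
    have h2 := hgeom j
    have h3 : (2*K*(p k₁ - ξ)/H₀) * ρ^(k₁+1) * (∑ i ∈ Finset.range j, ρ^i) ≤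
        (2*K*(p k₁ - ξ)/H₀) * ρ^(k₁+1) * (1/(1-ρ)) :=
      mul_le_mul_of_nonneg_left h2 hA0
    linarith
  have hetend : Filter.Tendsto (fun k => p k - ξ) Filter.atTop (nhds 0) := by
    have hsub := htend.sub_const ξ
    rw [sub_self] at hsub
    exact hsub
  obtain ⟨N, hN⟩ := (Metric.tendsto_atTop.mp hetend) ((p k₁ - ξ)/2)
    (by linarith [he0 k₁])
  have h5 := hN (k₁ + N) (Nat.le_add_left _ _)
  rw [Real.dist_eq, sub_zero, abs_of_pos (he0 _)] at h5
  have h6 := hfinal N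
  linarith

set_option maxHeartbeats 2000000 in
lemma rfde_abstract (hr : 0 < r) (hc0 : 0 < c) (hc1 : c < 1) (hT : a + 2*r ≤ T)
    (hd : ∀ t, a ≤ t → HasDerivWithinAt y (d t) (Set.Ici a) t)
    (hkey : ∀ t, T ≤ t → ∀ S, 0 ≤ S →
      (∀ θ ∈ Set.Icc (0:ℝ) r, ‖y t - y (t - θ)‖ ≤ S * θ) → ‖d t‖ ≤ c * S) :
    ∃ L : ℂ, Filter.Tendsto y Filter.atTop (nhds L) := by
  have hcne : c ≠ 0 := ne_of_gt hc0
  set κ := (1 + c⁻¹)/2 with hκdef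
  have hcinv : 1 < c⁻¹ := (one_lt_inv₀ hc0).mpr hc1
  have hκ1 : 1 < κ := by rw [hκdef]; linarith
  have hκc : c * κ < 1 := by
    rw [hκdef]
    have : c * ((1 + c⁻¹)/2) = (c + c * c⁻¹)/2 := by ring
    rw [this, mul_inv_cancel₀ hcne]
    linarith
  have hycont : ContinuousOn y (Set.Ici a) :=
    fun s hs => (hd s hs).continuousWithinAt
  set T₁ := T + r with hT₁def
  -- uniform bounds on the windows J n = [T₁ + n r, T₁ + n r + r]
  have hJbound : ∀ n : ℕ, ∃ W, 0 ≤ W ∧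
      ∀ t ∈ Set.Icc (T₁ + n*r) (T₁ + n*r + r), ‖d t‖ ≤ W := by
    intro n
    have hsub : Set.Icc (T₁ + n*r - 2*r) (T₁ + n*r + r) ⊆ Set.Ici a := by
      intro s hs
      have hn0 : (0:ℝ) ≤ n := Nat.cast_nonneg n
      have h1 : T₁ + n*r - 2*r ≤ s := hs.1
      have h2 : a ≤ T₁ + n*r - 2*r := by
        have h3 : 0 ≤ (n:ℝ)*r := mul_nonneg hn0 hr.le
        simp only [hT₁def]; linarith
      exact le_trans h2 h1
    obtain ⟨B, hBb⟩ := (isCompact_Icc (a := T₁ + n*r - 2*r)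
      (b := T₁ + n*r + r)).exists_bound_of_continuousOn (hycont.mono hsub)
    refine ⟨max 1 (2*B / (r * (κ - 1))), le_trans zero_le_one (le_max_left _ _), ?_⟩
    intro t ht
    have hn0 : (0:ℝ) ≤ (n:ℝ)*r := mul_nonneg (Nat.cast_nonneg n) hr.le
    have ht1 : T + r ≤ t := by
      have := ht.1; simp only [hT₁def] at this ⊢; linarith
    apply rfde_no_blowup y d a r c κ T hr hκ1 hκc hT hd hkey ht1
    intro s hs
    exact hBb s ⟨by linarith [hs.1, ht.1], by linarith [hs.2, ht.2]⟩
  -- minimal bounds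
  set SB : ℕ → Set ℝ := fun n =>
    {W | 0 ≤ W ∧ ∀ t ∈ Set.Icc (T₁ + n*r) (T₁ + n*r + r), ‖d t‖ ≤ W} with hSBdef
  have hSBne : ∀ n, (SB n).Nonempty := fun n => by
    obtain ⟨W, h1, h2⟩ := hJbound n; exact ⟨W, h1, h2⟩
  have hSBbdd : ∀ n, BddBelow (SB n) := fun n => ⟨0, fun W hW => hW.1⟩
  set Mb : ℕ → ℝ := fun n => sInf (SB n) with hMbdef
  have hMb0 : ∀ n, 0 ≤ Mb n := fun n => le_csInf (hSBne n) (fun W hW => hW.1)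
  have hMble : ∀ n : ℕ, ∀ t ∈ Set.Icc (T₁ + n*r) (T₁ + n*r + r), ‖d t‖ ≤ Mb n := by
    intro n t ht
    exact le_csInf (hSBne n) (fun W hW => hW.2 t ht)
  -- contraction
  have hMbrec : ∀ n : ℕ, Mb (n+1) ≤ c * Mb n := by
    intro n
    set W := max (Mb n) (Mb (n+1)) with hWdef
    have hW0 : 0 ≤ W := le_trans (hMb0 n) (le_max_left _ _)
    have hWb : ∀ t ∈ Set.Icc (T₁ + (n+1 : ℕ)*r) (T₁ + (n+1 : ℕ)*r + r), ‖d t‖ ≤ c * W := by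
      intro t ht
      have htT : T ≤ t := by
        have := ht.1
        have hn0 : (0:ℝ) ≤ ((n+1 : ℕ):ℝ)*r := mul_nonneg (Nat.cast_nonneg _) hr.le
        simp only [hT₁def] at this; linarith
      apply hkey t htT W hW0
      intro θ hθ
      have hdb : ∀ s ∈ Set.Icc (t - θ) t, ‖d s‖ ≤ W := by
        intro s hs
        have hcast : ((n+1 : ℕ):ℝ) = (n:ℝ) + 1 := by push_cast; ring
        by_cases hcs : s ≤ T₁ + n*r + r
        · refine le_trans (hMble n s ⟨?_, hcs⟩) (le_max_left _ _)
          have := hs.1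
          have h1 := ht.1
          rw [hcast] at h1
          have := hθ.2
          linarith [hs.1, hθ.2]
        · push_neg at hcs
          refine le_trans (hMble (n+1) s ⟨?_, ?_⟩) (le_max_right _ _)
          · rw [hcast]; linarith
          · exact le_trans hs.2 ht.2
      have hmv := rfde_mvi y d a hd (show a ≤ t - θ by
        have := ht.1
        have hn0 : (0:ℝ) ≤ ((n+1 : ℕ):ℝ)*r := mul_nonneg (Nat.cast_nonneg _) hr.le
        have := hθ.2
        simp only [hT₁def] at *
        linarith [hθ.2, ht.1]) (by linarith [hθ.1]) hdb
      have heq9 : t - (t - θ) = θ := by ring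
      rw [heq9] at hmv
      exact hmv
    have h1 : Mb (n+1) ≤ c * W :=
      csInf_le (hSBbdd _) ⟨mul_nonneg hc0.le hW0, hWb⟩
    rcases max_cases (Mb n) (Mb (n+1)) with ⟨hWeq, _⟩ | ⟨hWeq, hlt⟩
    · rwa [hWdef, hWeq] at h1
    · rw [hWdef, hWeq] at h1
      have h2 : Mb (n+1) ≤ 0 := by nlinarith
      have h3 : Mb (n+1) = 0 := le_antisymm h2 (hMb0 _)
      rw [h3]
      exact mul_nonneg hc0.le (hMb0 n)
  have hMbgeo : ∀ n, Mb n ≤ Mb 0 * c^n := by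
    intro n
    induction n with
    | zero => simp
    | succ n ih =>
      calc Mb (n+1) ≤ c * Mb n := hMbrec n
        _ ≤ c * (Mb 0 * c^n) := mul_le_mul_of_nonneg_left ih hc0.le
        _ = Mb 0 * c^(n+1) := by ring
  -- grid sequence
  set g : ℕ → ℝ := fun n => T₁ + n*r with hgdef
  have hgsucc : ∀ n : ℕ, g (n+1) = g n + r := by
    intro n; simp only [hgdef]; push_cast; ring
  have hga : ∀ n, a ≤ g n := by
    intro n
    have hn0 : (0:ℝ) ≤ (n:ℝ)*r := mul_nonneg (Nat.cast_nonneg _) hr.le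
    simp only [hgdef, hT₁def]; linarith
  have hzstep : ∀ n : ℕ, dist (y (g n)) (y (g (n+1))) ≤ (Mb 0 * r) * c^n := by
    intro n
    rw [dist_eq_norm, norm_sub_rev, hgsucc]
    have hdb : ∀ s ∈ Set.Icc (g n) (g n + r), ‖d s‖ ≤ Mb n := by
      intro s hs
      exact hMble n s (by simpa [hgdef] using hs)
    have hmv := rfde_mvi y d a hd (hga n) (show g n ≤ g n + r by linarith) hdb
    have h2 : g n + r - g n = r := by ring
    rw [h2] at hmv
    calc ‖y (g n + r) - y (g n)‖ ≤ Mb n * r := hmv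
      _ ≤ (Mb 0 * c^n) * r := mul_le_mul_of_nonneg_right (hMbgeo n) hr.le
      _ = (Mb 0 * r) * c^n := by ring
  have hcauchy : CauchySeq (fun n => y (g n)) :=
    cauchySeq_of_le_geometric c (Mb 0 * r) hc1 hzstep
  obtain ⟨L, hL⟩ := cauchySeq_tendsto_of_complete hcauchy
  have hzL : ∀ n, dist (y (g n)) L ≤ (Mb 0 * r) * c^n / (1-c) :=
    dist_le_of_le_geometric_of_tendsto c (Mb 0 * r) hc1 hzstep hL
  refine ⟨L, ?_⟩
  rw [Metric.tendsto_atTop]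
  intro ε hε
  set D := Mb 0 * r + Mb 0 * r / (1-c) with hDdef
  have hD0 : 0 ≤ D := by
    have h1 : 0 ≤ Mb 0 * r := mul_nonneg (hMb0 0) hr.le
    have h2 : 0 ≤ Mb 0 * r / (1-c) := div_nonneg h1 (by linarith)
    rw [hDdef]; linarith
  have htendD : Filter.Tendsto (fun n : ℕ => D * c^n) Filter.atTop (nhds 0) := by
    have h2 := tendsto_pow_atTop_nhds_zero_of_lt_one hc0.le hc1
    simpa using h2.const_mul D
  obtain ⟨n₀, hn₀⟩ := Filter.eventually_atTop.mp
    (htendD.eventually (eventually_lt_nhds hε))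
  have hn₀' : D * c^n₀ < ε := hn₀ n₀ (le_refl _)
  refine ⟨g n₀, fun t ht => ?_⟩
  have hg₀ : g n₀ = T₁ + n₀*r := rfl
  have hn₀r : (0:ℝ) ≤ (n₀:ℝ)*r := mul_nonneg (Nat.cast_nonneg _) hr.le
  have htT₁ : T₁ ≤ t := by rw [hg₀] at ht; linarith
  set m := Nat.floor ((t - T₁)/r) with hmdef
  have hq0 : 0 ≤ (t - T₁)/r := div_nonneg (by linarith) hr.le
  have hm1 : (m:ℝ)*r ≤ t - T₁ := by
    have h5 : (m:ℝ) ≤ (t-T₁)/r := Nat.floor_le hq0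
    calc (m:ℝ)*r ≤ ((t-T₁)/r)*r := mul_le_mul_of_nonneg_right h5 hr.le
      _ = t - T₁ := by field_simp
  have hm2 : t - T₁ < ((m:ℝ)+1)*r := by
    have h5 := Nat.lt_floor_add_one ((t - T₁)/r)
    rw [← hmdef] at h5
    have h6 : (t-T₁)/r * r < ((m:ℝ)+1)*r := mul_lt_mul_of_pos_right h5 hr
    calc t - T₁ = (t-T₁)/r*r := by field_simp
      _ < _ := h6
  have hm3 : n₀ ≤ m := by
    rw [hmdef]
    apply Nat.le_floor
    rw [le_div_iff₀ hr]
    rw [hg₀] at ht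
    linarith
  have hgm : g m = T₁ + m*r := rfl
  have hdbm : ∀ s ∈ Set.Icc (g m) t, ‖d s‖ ≤ Mb m := by
    intro s hs
    apply hMble m
    rw [hgm] at hs
    exact ⟨hs.1, le_trans hs.2 (by linarith)⟩
  have hmv := rfde_mvi y d a hd (hga m) (show g m ≤ t by rw [hgm]; linarith) hdbm
  have hd1 : ‖y t - y (g m)‖ ≤ Mb m * r := by
    calc ‖y t - y (g m)‖ ≤ Mb m * (t - g m) := hmv
      _ ≤ Mb m * r := mul_le_mul_of_nonneg_left (by rw [hgm]; linarith) (hMb0 m)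
  have hcm : c^m ≤ c^n₀ := pow_le_pow_of_le_one hc0.le hc1.le hm3
  have h7 : dist (y t) L ≤ dist (y t) (y (g m)) + dist (y (g m)) L := dist_triangle _ _ _
  have h8 : dist (y t) (y (g m)) ≤ Mb 0 * r * c^m := by
    rw [dist_eq_norm]
    calc ‖y t - y (g m)‖ ≤ Mb m * r := hd1
      _ ≤ (Mb 0 * c^m) * r := mul_le_mul_of_nonneg_right (hMbgeo m) hr.le
      _ = Mb 0 * r * c^m := by ring
  have h9 : dist (y (g m)) L ≤ Mb 0 * r * c^m / (1-c) := hzL m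
  have h10 : Mb 0 * r * c^m + Mb 0 * r * c^m/(1-c) ≤ D * c^n₀ := by
    have h1c : (1:ℝ) - c ≠ 0 := by linarith
    have hDm : Mb 0 * r * c^m + Mb 0 * r * c^m/(1-c) = D * c^m := by
      rw [hDdef]; field_simp
    rw [hDm]
    exact mul_le_mul_of_nonneg_left hcm hD0
  calc dist (y t) L ≤ dist (y t) (y (g m)) + dist (y (g m)) L := h7
    _ ≤ Mb 0 * r * c^m + Mb 0 * r * c^m/(1-c) := by linarith
    _ ≤ D * c^n₀ := h10
    _ < ε := hn₀'

end DelayAbstract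

set_option maxHeartbeats 2000000 in


/- Context: for each `t ≥ t₀`, the complex measure `η t` on `[0, r]` is given in polar
form `dη(t) = h t dν(t)`, where `ν t` is a finite (nonnegative) measure supported on
`[0, r]` and `‖h t θ‖ = 1` for `ν t`-a.e. `θ`; its total variation measure is then
`‖η t‖ = ν t`.  A solution of the RFDE `x'(t) = ∫_0^r x(t-θ) dη(t)(θ)` is a continuous
function on `[t₀ - r, ∞)`, differentiable on `[t₀, ∞)` (right derivative at `t₀`),
satisfying the equation there; `λ` is a solution of the generalized characteristic
equation `λ(t) = ∫_0^r exp(-∫_{t-θ}^t λ(s) ds) dη(t)(θ)`. -/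
set_option maxHeartbeats 2000000 in
theorem stmt0
    (r t₀ : ℝ) (hr : 0 < r)
    (ν : ℝ → Measure ℝ)
    (hfin : ∀ t, t₀ ≤ t → IsFiniteMeasure (ν t))
    (hsupp : ∀ t, t₀ ≤ t → ν t (Set.Icc 0 r)ᶜ = 0)
    (h : ℝ → ℝ → ℂ)
    (hh : ∀ t, t₀ ≤ t → ∀ᵐ θ ∂(ν t), ‖h t θ‖ = 1)
    -- λ is a solution of the generalized characteristic equation
    (lam : ℝ → ℂ)
    (hlamc : ContinuousOn lam (Set.Ici (t₀ - r)))
    (hlamint : ∀ t, t₀ ≤ t → IntegrableOn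
      (fun θ => Complex.exp (-(∫ s in (t - θ)..t, lam s)) * h t θ) (Set.Icc 0 r) (ν t))
    (hlam : ∀ t, t₀ ≤ t →
      lam t = ∫ θ in Set.Icc 0 r, Complex.exp (-(∫ s in (t - θ)..t, lam s)) * h t θ ∂(ν t))
    -- the smallness condition: limsup_{t→∞} ∫_0^r θ ‖exp(-∫_{t-θ}^t λ)‖ d‖η t‖(θ) < 1
    (hbdd : IsBoundedUnder (· ≤ ·) atTop (fun t => ∫ θ in Set.Icc 0 r,
      θ * ‖Complex.exp (-(∫ s in (t - θ)..t, lam s))‖ ∂(ν t)))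
    (hV : limsup (fun t => ∫ θ in Set.Icc 0 r,
      θ * ‖Complex.exp (-(∫ s in (t - θ)..t, lam s))‖ ∂(ν t)) atTop < 1)
    -- x is a solution of the RFDE
    (x : ℝ → ℂ)
    (hxc : ContinuousOn x (Set.Ici (t₀ - r)))
    (hxint : ∀ t, t₀ ≤ t →
      IntegrableOn (fun θ => x (t - θ) * h t θ) (Set.Icc 0 r) (ν t))
    (hx : ∀ t, t₀ ≤ t → HasDerivWithinAt x
      (∫ θ in Set.Icc 0 r, x (t - θ) * h t θ ∂(ν t)) (Set.Ici t₀) t) :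
    ∃ L : ℂ, Tendsto (fun t => x t * Complex.exp (-(∫ s in t₀..t, lam s)))
      atTop (𝓝 L) := by
  set V : ℝ → ℝ := fun t => ∫ θ in Set.Icc 0 r,
      θ * ‖Complex.exp (-(∫ s in (t - θ)..t, lam s))‖ ∂(ν t) with hVdef
  set ℓ := limsup V atTop with hℓdef
  have hℓ1 : ℓ < 1 := hV
  set c := (max ℓ 0 + 1)/2 with hcdef
  have hmax1 : max ℓ 0 < 1 := max_lt hℓ1 one_pos
  have hmax0 : (0:ℝ) ≤ max ℓ 0 := le_max_right _ _
  have hc1 : c < 1 := by rw [hcdef]; linarith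
  have hc0 : 0 < c := by rw [hcdef]; linarith
  have hℓc : ℓ < c := by
    have : ℓ ≤ max ℓ 0 := le_max_left _ _
    rw [hcdef]; linarith
  have hev : ∀ᶠ t in atTop, V t < c := eventually_lt_of_limsup_lt hℓc hbdd
  obtain ⟨T', hT'⟩ := eventually_atTop.mp hev
  set T := max T' (t₀ + 2*r) with hTdef
  have hTt₀ : t₀ + 2*r ≤ T := le_max_right _ _
  have hTV : ∀ t, T ≤ t → V t ≤ c :=
    fun t ht => (hT' t (le_trans (le_max_left _ _) ht)).le
  have ht₀T : t₀ ≤ T := by linarith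
  -- interval integrability of lam
  have hlamii : ∀ u v : ℝ, t₀ - r ≤ u → t₀ - r ≤ v → IntervalIntegrable lam volume u v := by
    intro u v hu hv
    apply ContinuousOn.intervalIntegrable
    apply hlamc.mono
    intro s hs
    rcases le_total u v with huv | huv
    · rw [Set.uIcc_of_le huv] at hs; exact le_trans hu hs.1
    · rw [Set.uIcc_of_ge huv] at hs; exact le_trans hv hs.1
  set y : ℝ → ℂ := fun t => x t * Complex.exp (-(∫ s in t₀..t, lam s)) with hydef
  set d : ℝ → ℂ := fun t => ∫ θ in Set.Icc 0 r,
      Complex.exp (-(∫ s in (t - θ)..t, lam s)) * (y (t - θ) - y t) * h t θ ∂(ν t) with hddef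
  -- derivative of the exponential factor
  have hE : ∀ t : ℝ, t₀ ≤ t → HasDerivAt (fun u => Complex.exp (-(∫ s in t₀..u, lam s)))
      (Complex.exp (-(∫ s in t₀..t, lam s)) * (-(lam t))) t := by
    intro t ht
    have hF : HasDerivAt (fun u => ∫ s in t₀..u, lam s) (lam t) t := by
      apply intervalIntegral.integral_hasDerivAt_right
        (hlamii t₀ t (by linarith) (by linarith))
      · exact ContinuousOn.stronglyMeasurableAtFilter isOpen_Ioi
          (hlamc.mono Set.Ioi_subset_Ici_self) t (by simp only [Set.mem_Ioi]; linarith)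
      · exact hlamc.continuousAt (Ici_mem_nhds (by linarith))
    exact hF.neg.cexp
  have hyd : ∀ t, t₀ ≤ t → HasDerivWithinAt y
      ((∫ θ in Set.Icc 0 r, x (t - θ) * h t θ ∂(ν t)) * Complex.exp (-(∫ s in t₀..t, lam s))
        + x t * (Complex.exp (-(∫ s in t₀..t, lam s)) * (-(lam t)))) (Set.Ici t₀) t := by
    intro t ht
    exact (hx t ht).mul ((hE t ht).hasDerivWithinAt)
  -- representation of d
  have hrep : ∀ t, t₀ ≤ t → d t =
      (∫ θ in Set.Icc 0 r, x (t - θ) * h t θ ∂(ν t)) * Complex.exp (-(∫ s in t₀..t, lam s))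
        + x t * (Complex.exp (-(∫ s in t₀..t, lam s)) * (-(lam t))) := by
    intro t ht
    have hint1 : IntegrableOn
        (fun θ => Complex.exp (-(∫ s in t₀..t, lam s)) * (x (t - θ) * h t θ))
        (Set.Icc 0 r) (ν t) := (hxint t ht).const_mul _
    have hint2 : IntegrableOn
        (fun θ => (Complex.exp (-(∫ s in (t - θ)..t, lam s)) * h t θ) * y t)
        (Set.Icc 0 r) (ν t) := (hlamint t ht).mul_const _
    have heq : Set.EqOn
        (fun θ => Complex.exp (-(∫ s in (t - θ)..t, lam s)) * (y (t - θ) - y t) * h t θ)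
        (fun θ => Complex.exp (-(∫ s in t₀..t, lam s)) * (x (t - θ) * h t θ)
          - (Complex.exp (-(∫ s in (t - θ)..t, lam s)) * h t θ) * y t)
        (Set.Icc 0 r) := by
      intro θ hθ
      dsimp only
      have key : Complex.exp (-(∫ s in (t - θ)..t, lam s))
          * Complex.exp (-(∫ s in t₀..(t - θ), lam s))
          = Complex.exp (-(∫ s in t₀..t, lam s)) := by
        rw [← Complex.exp_add]
        congr 1
        have hadd := intervalIntegral.integral_add_adjacent_intervals
          (hlamii t₀ (t - θ) (by linarith) (by
            have := hθ.2; have := hθ.1; simp only [Set.mem_Icc] at hθ; linarith [hθ.1, hθ.2]))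
          (hlamii (t - θ) t (by
            simp only [Set.mem_Icc] at hθ; linarith [hθ.1, hθ.2]) (by linarith))
        rw [← hadd]; ring
      have hyθ : y (t - θ) = x (t - θ) * Complex.exp (-(∫ s in t₀..(t - θ), lam s)) := rfl
      rw [hyθ]
      linear_combination (x (t - θ) * h t θ) * key
    have hsplit : d t = (∫ θ in Set.Icc 0 r,
          Complex.exp (-(∫ s in t₀..t, lam s)) * (x (t - θ) * h t θ) ∂(ν t))
        - ∫ θ in Set.Icc 0 r,
          (Complex.exp (-(∫ s in (t - θ)..t, lam s)) * h t θ) * y t ∂(ν t) := by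
      rw [hddef]
      dsimp only
      rw [MeasureTheory.setIntegral_congr_fun measurableSet_Icc heq]
      exact MeasureTheory.integral_sub hint1 hint2
    rw [hsplit, MeasureTheory.integral_const_mul, MeasureTheory.integral_mul_const,
      ← hlam t ht]
    have hyt : y t = x t * Complex.exp (-(∫ s in t₀..t, lam s)) := rfl
    rw [hyt]
    ring
  have hd2 : ∀ t, t₀ ≤ t → HasDerivWithinAt y (d t) (Set.Ici t₀) t := by
    intro t ht
    rw [hrep t ht]
    exact hyd t ht
  -- key estimate
  have hkey : ∀ t, T ≤ t → ∀ S, 0 ≤ S →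
      (∀ θ ∈ Set.Icc (0:ℝ) r, ‖y t - y (t - θ)‖ ≤ S * θ) → ‖d t‖ ≤ c * S := by
    intro t ht S hS hchord
    have ht₀ : t₀ ≤ t := le_trans ht₀T ht
    have hmeas : MeasurableSet (Set.Icc (0:ℝ) r) := measurableSet_Icc
    have h1 : ∀ᵐ θ ∂((ν t).restrict (Set.Icc 0 r)), ‖h t θ‖ = 1 :=
      ae_restrict_of_ae (hh t ht₀)
    have h2 : ∀ᵐ θ ∂((ν t).restrict (Set.Icc 0 r)), θ ∈ Set.Icc (0:ℝ) r :=
      ae_restrict_mem hmeas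
    have hbase : Integrable (fun θ => ‖Complex.exp (-(∫ s in (t - θ)..t, lam s)) * h t θ‖)
        ((ν t).restrict (Set.Icc 0 r)) := (hlamint t ht₀).norm
    have hgaesm : AEStronglyMeasurable
        (fun θ => (S * θ) * ‖Complex.exp (-(∫ s in (t - θ)..t, lam s)) * h t θ‖)
        ((ν t).restrict (Set.Icc 0 r)) :=
      ((continuous_const.mul continuous_id).aestronglyMeasurable).mul hbase.aestronglyMeasurable
    have haesm : AEStronglyMeasurable
        (fun θ => S * (θ * ‖Complex.exp (-(∫ s in (t - θ)..t, lam s))‖))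
        ((ν t).restrict (Set.Icc 0 r)) := by
      apply hgaesm.congr
      filter_upwards [h1] with θ hθ1
      rw [norm_mul, hθ1, mul_one]
      ring
    have hgint : Integrable (fun θ => S * (θ * ‖Complex.exp (-(∫ s in (t - θ)..t, lam s))‖))
        ((ν t).restrict (Set.Icc 0 r)) := by
      apply Integrable.mono (hbase.const_mul (S*r)) haesm
      filter_upwards [h1, h2] with θ hθ1 hθ2
      have hE0 : (0:ℝ) ≤ ‖Complex.exp (-(∫ s in (t - θ)..t, lam s))‖ := norm_nonneg _
      rw [Real.norm_eq_abs, Real.norm_eq_abs, norm_mul, hθ1, mul_one]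
      rw [abs_of_nonneg (mul_nonneg hS (mul_nonneg hθ2.1 hE0)),
        abs_of_nonneg (mul_nonneg (mul_nonneg hS hr.le) hE0)]
      nlinarith [mul_nonneg (mul_nonneg hS (sub_nonneg.mpr hθ2.2)) hE0]
    have hae : ∀ᵐ θ ∂((ν t).restrict (Set.Icc 0 r)),
        ‖Complex.exp (-(∫ s in (t - θ)..t, lam s)) * (y (t - θ) - y t) * h t θ‖ ≤
        S * (θ * ‖Complex.exp (-(∫ s in (t - θ)..t, lam s))‖) := by
      filter_upwards [h1, h2] with θ hθ1 hθ2
      rw [norm_mul, norm_mul, hθ1, mul_one]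
      have h3 : ‖y (t - θ) - y t‖ ≤ S * θ := by
        rw [norm_sub_rev]; exact hchord θ hθ2
      have hE0 : (0:ℝ) ≤ ‖Complex.exp (-(∫ s in (t - θ)..t, lam s))‖ := norm_nonneg _
      calc ‖Complex.exp (-(∫ s in (t - θ)..t, lam s))‖ * ‖y (t - θ) - y t‖
          ≤ ‖Complex.exp (-(∫ s in (t - θ)..t, lam s))‖ * (S * θ) :=
            mul_le_mul_of_nonneg_left h3 hE0
        _ = S * (θ * ‖Complex.exp (-(∫ s in (t - θ)..t, lam s))‖) := by ring
    have h4 : ‖d t‖ ≤ ∫ θ in Set.Icc 0 r,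
        S * (θ * ‖Complex.exp (-(∫ s in (t - θ)..t, lam s))‖) ∂(ν t) := by
      rw [hddef]
      dsimp only
      exact MeasureTheory.norm_integral_le_of_norm_le hgint hae
    have h5 : ∫ θ in Set.Icc 0 r,
        S * (θ * ‖Complex.exp (-(∫ s in (t - θ)..t, lam s))‖) ∂(ν t) = S * V t := by
      rw [hVdef]
      exact MeasureTheory.integral_const_mul S _
    calc ‖d t‖ ≤ S * V t := by rw [← h5]; exact h4
      _ ≤ S * c := mul_le_mul_of_nonneg_left (hTV t ht) hS
      _ = c * S := mul_comm S c
  exact rfde_abstract y d t₀ r c T hr hc0 hc1 hTt₀ hd2 hkey
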